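/- The class of context-free spanners is not closed under natural join: there exist context-free spanners S1 and S2 such that no context-free spanner equals their natural join S1 ⋈ S2. -/

import Mathlib

/-- A variable operation: `(x, true)` is `⊢x` (open), `(x, false)` is `⊣x` (close). -/
abbrev VarOp (X : Type) : Type := X × Bool

/-- A ref-word: a word over the extended alphabet `Σ ∪ Γ_X`. -/
abbrev RefWord (T X : Type) : Type := List (T ⊕ VarOp X)

/-- The morphism `clr` erasing variable operations and fixing letters of `Σ`. -/
def clr {T X : Type} (r : RefWord T X) : List T :=
  r.filterMap (fun a => match a with | Sum.inl t => some t | Sum.inr _ => none)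

/-- A ref-word is valid for `X`: each `⊢x` and `⊣x` occurs exactly once, `⊢x` before `⊣x`. -/
def ValidRef {T X : Type} (r : RefWord T X) : Prop :=
  ∀ x : X, ∃ u v w : RefWord T X,
    r = u ++ Sum.inr (x, true) :: (v ++ Sum.inr (x, false) :: w) ∧
    ∀ b : Bool, Sum.inr (x, b) ∉ u ∧ Sum.inr (x, b) ∉ v ∧ Sum.inr (x, b) ∉ w

/-- `μ` is the `(X,d)`-mapping `μ^r` induced by the ref-word `r`. -/
def MappingOf {T X : Type} (r : RefWord T X) (μ : X → ℕ × ℕ) : Prop :=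
  ∀ x : X, ∃ u v w : RefWord T X,
    r = u ++ Sum.inr (x, true) :: (v ++ Sum.inr (x, false) :: w) ∧
    μ x = ((clr u).length + 1, (clr u).length + 1 + (clr v).length)

/-- The spanner defined by an extraction grammar (a CFG over `Σ ∪ Γ_X`). -/
def spanner {T X : Type} (G : ContextFreeGrammar (T ⊕ VarOp X)) (d : List T) :
    Set (X → ℕ × ℕ) :=
  {μ | ∃ r : RefWord T X, r ∈ G.language ∧ ValidRef r ∧ clr r = d ∧ MappingOf r μ}

/-- A spanner is context-free if it is definable by an extraction grammar. -/
def IsCFSpanner {T X : Type} (S : List T → Set (X → ℕ × ℕ)) : Prop :=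
  ∃ G : ContextFreeGrammar.{0} (T ⊕ VarOp X), ∀ d : List T, S d = spanner G d


namespace CFPump

variable {T : Type}

inductive PT (T : Type) (N : Type) where
  | leaf : T → PT T N
  | node : N → List (PT T N) → PT T N

namespace PT
variable {N : Type}

def symb : PT T N → Symbol T N
  | .leaf t => .terminal t
  | .node A _ => .nonterminal A

mutual
def yld : PT T N → List T
  | .leaf t => [t]
  | .node _ c => ylds c
def ylds : List (PT T N) → List T
  | [] => []
  | t :: ts => yld t ++ ylds ts
end

mutual
def sz : PT T N → ℕ
  | .leaf _ => 1
  | .node _ c => 1 + szs c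
def szs : List (PT T N) → ℕ
  | [] => 0
  | t :: ts => sz t + szs ts
end

mutual
def ht : PT T N → ℕ
  | .leaf _ => 1
  | .node _ c => 1 + hts c
def hts : List (PT T N) → ℕ
  | [] => 0
  | t :: ts => max (ht t) (hts ts)
end

end PT



open PT

variable {N : Type}

lemma ylds_append (a b : List (PT T N)) : ylds (a ++ b) = ylds a ++ ylds b := by
  induction a with
  | nil => simp [ylds]
  | cons t ts ih => simp [ylds, ih]

lemma szs_append (a b : List (PT T N)) : szs (a ++ b) = szs a + szs b := by
  induction a with
  | nil => simp [szs]
  | cons t ts ih => simp [szs, ih]; omega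

lemma sz_pos : ∀ t : PT T N, 0 < sz t
  | .leaf _ => by simp [sz]
  | .node _ _ => by simp [sz]

lemma sz_le_szs_of_mem {t : PT T N} {c : List (PT T N)} (h : t ∈ c) : sz t ≤ szs c := by
  induction c with
  | nil => simp at h
  | cons s ts ih =>
    rcases List.mem_cons.1 h with rfl | h
    · simp only [szs]; omega
    · have := ih h; simp only [szs]; omega

lemma ht_le_hts_of_mem {t : PT T N} {c : List (PT T N)} (h : t ∈ c) : ht t ≤ hts c := by
  induction c with
  | nil => simp at h
  | cons s ts ih =>
    rcases List.mem_cons.1 h with rfl | h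
    · simp only [hts]; exact le_max_left _ _
    · simp only [hts]; exact le_trans (ih h) (le_max_right _ _)

variable {g : ContextFreeGrammar T}

inductive WF (g : ContextFreeGrammar T) : PT T g.NT → Prop where
  | leaf (t : T) : WF g (.leaf t)
  | node (r : ContextFreeRule T g.NT) (hr : r ∈ g.rules) (c : List (PT T g.NT))
      (hsy : c.map symb = r.output) (hc : ∀ s ∈ c, WF g s) : WF g (.node r.input c)

lemma derives_cons {s : Symbol T g.NT} {l w1 w2} (h1 : g.Derives [s] w1) (h2 : g.Derives l w2) :
    g.Derives (s :: l) (w1 ++ w2) := by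
  have := (h1.append_right l).trans (h2.append_left w1)
  simpa using this

lemma derives_list : ∀ (c : List (PT T g.NT)),
    (∀ s ∈ c, g.Derives [symb s] ((yld s).map Symbol.terminal)) →
    g.Derives (c.map symb) ((ylds c).map Symbol.terminal)
  | [], _ => by simpa [ylds] using ContextFreeGrammar.Derives.refl (g := g) []
  | t :: ts, h => by
    rw [List.map_cons, ylds, List.map_append]
    exact derives_cons (h t (by simp)) (derives_list ts (fun s hs => h s (by simp [hs])))

lemma WF.sound {t : PT T g.NT} (h : WF g t) :
    g.Derives [symb t] ((yld t).map Symbol.terminal) := by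
  induction h with
  | leaf t => simpa [symb, yld] using ContextFreeGrammar.Derives.refl (g := g) [Symbol.terminal t]
  | node r hr c hsy hc ih =>
    have hstep : g.Produces [Symbol.nonterminal r.input] r.output :=
      ⟨r, hr, ContextFreeRule.Rewrites.input_output⟩
    have hd := derives_list c ih
    rw [hsy] at hd
    simpa [symb, yld] using hstep.trans_derives hd

lemma ylds_map_leaf (w : List T) : ylds ((w.map PT.leaf) : List (PT T N)) = w := by
  induction w with
  | nil => simp [ylds]
  | cons a l ih => simp [ylds, yld, ih]

lemma complete {u : List (Symbol T g.NT)} {w : List T}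
    (h : g.Derives u (w.map Symbol.terminal)) :
    ∃ c : List (PT T g.NT), (∀ s ∈ c, WF g s) ∧ c.map symb = u ∧ ylds c = w := by
  induction h using Relation.ReflTransGen.head_induction_on with
  | refl =>
    refine ⟨w.map PT.leaf, ?_, ?_, ylds_map_leaf w⟩
    · intro s hs
      obtain ⟨a, _, rfl⟩ := List.mem_map.1 hs
      exact WF.leaf a
    · simp [symb]
  | head hp _ ih =>
    obtain ⟨r, hr, hrw⟩ := hp
    obtain ⟨p, q, hu, hv⟩ := hrw.exists_parts
    obtain ⟨ts, hwf, hsy, hyld⟩ := ih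
    rw [hv, List.append_assoc] at hsy
    obtain ⟨ts1, ts23, rfl, hsy1, hsy23⟩ := List.map_eq_append_iff.1 hsy
    obtain ⟨ts2, ts3, rfl, hsy2, hsy3⟩ := List.map_eq_append_iff.1 hsy23
    refine ⟨ts1 ++ (PT.node r.input ts2) :: ts3, ?_, ?_, ?_⟩
    · intro s hs
      rcases List.mem_append.1 hs with h1 | h2
      · exact hwf s (by simp [h1])
      · rcases List.mem_cons.1 h2 with rfl | h3
        · exact WF.node r hr ts2 hsy2 (fun s hs => hwf s (by simp [hs]))
        · exact hwf s (by simp [h3])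
    · simp [hsy1, hsy3, symb, hu]
    · rw [ylds_append] at hyld ⊢
      rw [ylds_append] at hyld
      simpa [ylds, yld] using hyld

lemma exists_tree {w : List T} (h : w ∈ g.language) :
    ∃ t : PT T g.NT, WF g t ∧ symb t = Symbol.nonterminal g.initial ∧ yld t = w := by
  obtain ⟨c, hwf, hsy, hyld⟩ := complete (g := g) h
  have hl : c.length = 1 := by
    have := congrArg List.length hsy; simpa using this
  obtain ⟨t, rfl⟩ := List.length_eq_one_iff.1 hl
  refine ⟨t, hwf t (by simp), ?_, ?_⟩
  · simpa using hsy
  · simpa [ylds] using hyld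



section Part2
variable {T : Type} {N : Type}
open PT

inductive Subt : PT T N → PT T N → Prop where
  | refl (t) : Subt t t
  | step {s t' : PT T N} (A : N) (c : List (PT T N)) (h : t' ∈ c) (hs : Subt s t') :
      Subt s (.node A c)

def ProperSub (s t : PT T N) : Prop :=
  ∃ A c, t = PT.node A c ∧ ∃ t' ∈ c, Subt s t'

lemma ProperSub.subt {s t : PT T N} (h : ProperSub s t) : Subt s t := by
  obtain ⟨A, c, rfl, t', ht', hs⟩ := h
  exact Subt.step A c ht' hs

lemma Subt.trans' {s t u : PT T N} (h1 : Subt s t) (h2 : Subt t u) : Subt s u := by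
  induction h2 with
  | refl => exact h1
  | step A c hmem _ ih => exact Subt.step A c hmem ih

lemma ProperSub.trans_left {s t u : PT T N} (h1 : Subt s t) (h2 : ProperSub t u) :
    ProperSub s u := by
  obtain ⟨A, c, rfl, t', ht', hs⟩ := h2
  exact ⟨A, c, rfl, t', ht', h1.trans' hs⟩

lemma ProperSub.trans'' {s t u : PT T N} (h1 : ProperSub s t) (h2 : ProperSub t u) :
    ProperSub s u := ProperSub.trans_left h1.subt h2

lemma Subt.sz_le {s t : PT T N} (h : Subt s t) : sz s ≤ sz t := by
  induction h with
  | refl => exact le_refl _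
  | step A c hmem _ ih =>
    calc sz s ≤ sz _ := ih
    _ ≤ szs c := sz_le_szs_of_mem hmem
    _ ≤ 1 + szs c := by omega
    _ = sz (PT.node A c) := by simp [sz]

lemma ProperSub.sz_lt {s t : PT T N} (h : ProperSub s t) : sz s < sz t := by
  obtain ⟨A, c, rfl, t', ht', hs⟩ := h
  have := hs.sz_le.trans (sz_le_szs_of_mem ht')
  simp only [sz]
  omega

variable {g : ContextFreeGrammar T}

lemma WF.of_subt {s t : PT T g.NT} (h : Subt s t) (hwf : WF g t) : WF g s := by
  induction h with
  | refl => exact hwf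
  | step A c hmem _ ih =>
    cases hwf with
    | node r hr c hsy hc => exact ih (hc _ hmem)

lemma derives_append {u u' v v' : List (Symbol T g.NT)}
    (h1 : g.Derives u u') (h2 : g.Derives v v') : g.Derives (u ++ v) (u' ++ v') :=
  (h1.append_right v).trans (h2.append_left u')

lemma subt_decomp {t s : PT T g.NT} (hsub : Subt s t) (hwf : WF g t) :
    ∃ p q : List T, yld t = p ++ yld s ++ q ∧
      g.Derives [symb t] ((p.map Symbol.terminal) ++ [symb s] ++ (q.map Symbol.terminal)) ∧
      ∀ s' : PT T g.NT, WF g s' → symb s' = symb s →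
        ∃ t' : PT T g.NT, WF g t' ∧ symb t' = symb t ∧ yld t' = p ++ yld s' ++ q ∧
          sz t' + sz s = sz t + sz s' := by
  induction hsub with
  | refl =>
    refine ⟨[], [], by simp, by simpa using ContextFreeGrammar.Derives.refl (g := g) _, ?_⟩
    intro s' hwf' hsy'
    exact ⟨s', hwf', hsy', by simp, by omega⟩
  | @step t0 A c hmem hsubt ih =>
    cases hwf with
    | node r hr c hsy hc =>
      obtain ⟨p', q', hy, hder, hsubst⟩ := ih (hc _ hmem)
      obtain ⟨c1, c2, rfl⟩ := List.append_of_mem hmem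
      refine ⟨ylds c1 ++ p', q' ++ ylds c2, ?_, ?_, ?_⟩
      · rw [show yld (PT.node r.input (c1 ++ t0 :: c2)) = ylds c1 ++ yld t0 ++ ylds c2 by
          simp [yld, ylds_append, ylds]]
        rw [hy]; simp
      · show g.Derives [symb (PT.node r.input (c1 ++ t0 :: c2))]
          (((ylds c1 ++ p').map Symbol.terminal) ++ [symb s] ++
            ((q' ++ ylds c2).map Symbol.terminal))
        have hstep : g.Produces [Symbol.nonterminal r.input] ((c1 ++ t0 :: c2).map symb) := by
          rw [hsy]; exact ⟨r, hr, ContextFreeRule.Rewrites.input_output⟩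
        have h1 : g.Derives (c1.map symb) ((ylds c1).map Symbol.terminal) :=
          derives_list c1 (fun x hx => (hc x (by simp [hx])).sound)
        have h2 : g.Derives (c2.map symb) ((ylds c2).map Symbol.terminal) :=
          derives_list c2 (fun x hx => (hc x (by simp [hx])).sound)
        have hall := derives_append h1 (derives_append hder h2)
        have hfin : g.Derives [Symbol.nonterminal r.input]
            (((ylds c1 ++ p').map Symbol.terminal) ++ [symb s] ++
              ((q' ++ ylds c2).map Symbol.terminal)) := by
          refine hstep.trans_derives ?_
          have e1 : (c1 ++ t0 :: c2).map symb =
              c1.map symb ++ ([symb t0] ++ c2.map symb) := by simp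
          have e2 : (((ylds c1 ++ p').map Symbol.terminal) ++ [symb s] ++
              ((q' ++ ylds c2).map Symbol.terminal)) =
              ((ylds c1).map Symbol.terminal) ++
                (((p'.map Symbol.terminal) ++ [symb s] ++ (q'.map Symbol.terminal)) ++
                  ((ylds c2).map Symbol.terminal)) := by simp
          rw [e1, e2]; exact hall
        exact hfin
      · intro s' hwf' hsy'
        obtain ⟨t0', hwf0, hsy0, hy0, hsz0⟩ := hsubst s' hwf' hsy'
        refine ⟨PT.node r.input (c1 ++ t0' :: c2), ?_, by simp [symb], ?_, ?_⟩
        · refine WF.node r hr _ ?_ ?_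
          · rw [← hsy]; simp [hsy0]
          · intro x hx
            rcases List.mem_append.1 hx with h1 | h2
            · exact hc x (by simp [h1])
            · rcases List.mem_cons.1 h2 with rfl | h3
              · exact hwf0
              · exact hc x (by simp [h3])
        · rw [show yld (PT.node r.input (c1 ++ t0' :: c2)) = ylds c1 ++ yld t0' ++ ylds c2 by
            simp [yld, ylds_append, ylds]]
          rw [hy0]; simp
        · have e1 : sz (PT.node r.input (c1 ++ t0' :: c2)) =
              1 + (szs c1 + (sz t0' + szs c2)) := by simp [sz, szs_append, szs]
          have e2 : sz (PT.node r.input (c1 ++ t0 :: c2)) =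
              1 + (szs c1 + (sz t0 + szs c2)) := by simp [sz, szs_append, szs]
          omega

lemma ht_pos : ∀ t : PT T N, 0 < ht t
  | .leaf _ => by simp [ht]
  | .node _ _ => by simp [ht]

lemma exists_max_child : ∀ c : List (PT T N), 0 < hts c → ∃ t0 ∈ c, hts c = ht t0 := by
  intro c
  induction c with
  | nil => simp [hts]
  | cons s ts ih =>
    intro _
    rcases le_or_gt (hts ts) (ht s) with h | h
    · exact ⟨s, by simp, by simp only [hts]; omega⟩
    · obtain ⟨t0, h1, h2⟩ := ih (by omega)
      exact ⟨t0, by simp [h1], by simp only [hts]; omega⟩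

lemma chain_of_ht : ∀ (k : ℕ) (t : PT T g.NT), WF g t → k + 2 ≤ ht t →
    ∃ l : List (PT T g.NT), l.length = k + 1 ∧
      List.Chain' (fun a b => ProperSub b a) l ∧
      (∀ s ∈ l, WF g s ∧ ∃ A c, s = PT.node A c) ∧ l.head? = some t := by
  intro k
  induction k with
  | zero =>
    intro t hwf hht
    match t with
    | .leaf a => simp [ht] at hht
    | .node A c =>
      refine ⟨[.node A c], rfl, List.isChain_singleton _, ?_, rfl⟩
      intro s hs
      rw [List.mem_singleton] at hs
      subst hs
      exact ⟨hwf, A, c, rfl⟩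
  | succ k ih =>
    intro t hwf hht
    match t with
    | .leaf a => simp [ht] at hht
    | .node A c =>
      have hhts : k + 2 ≤ hts c := by simp only [ht] at hht; omega
      obtain ⟨t0, hmem, hmax⟩ := exists_max_child c (by omega)
      obtain ⟨l0, hlen, hch, hall, hhead⟩ := ih t0 (by
        cases hwf with
        | node r hr c hsy hc => exact hc _ hmem) (by omega)
      refine ⟨PT.node A c :: l0, by simp [hlen], ?_, ?_, rfl⟩
      · rw [List.Chain', List.isChain_cons]
        refine ⟨?_, hch⟩
        intro y hy
        rw [hhead] at hy
        cases hy
        exact ⟨A, c, rfl, t0, hmem, Subt.refl _⟩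
      · intro s hs
        rcases List.mem_cons.1 hs with rfl | h
        · exact ⟨hwf, A, c, rfl⟩
        · exact hall s h

def MC (g : ContextFreeGrammar T) : ℕ :=
  max 2 (g.rules.sup (fun r => r.output.length))

lemma two_le_MC : 2 ≤ MC g := by unfold MC; omega

lemma output_le_MC {r : ContextFreeRule T g.NT} (h : r ∈ g.rules) : r.output.length ≤ MC g := by
  unfold MC
  have h2 := Finset.le_sup (f := fun r : ContextFreeRule T g.NT => r.output.length) h
  omega

lemma ylds_length : ∀ c : List (PT T N), (ylds c).length = (c.map (fun s => (yld s).length)).sum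
  | [] => by simp [ylds]
  | t :: ts => by simp [ylds, ylds_length ts]

lemma yld_len_le {t : PT T g.NT} (hwf : WF g t) : (yld t).length ≤ MC g ^ (ht t) := by
  induction hwf with
  | leaf a =>
    have := two_le_MC (g := g)
    simp only [yld, ht, List.length_singleton, pow_one]
    omega
  | node r hr c hsy hc ih =>
    have hM : 1 ≤ MC g := le_trans (by omega) (two_le_MC (g := g))
    have hbound : ∀ s ∈ c, (yld s).length ≤ MC g ^ (hts c) := by
      intro s hs
      exact le_trans (ih s hs) (Nat.pow_le_pow_right hM (ht_le_hts_of_mem hs))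
    have hsum : (ylds c).length ≤ c.length * MC g ^ (hts c) := by
      rw [ylds_length]
      calc (c.map (fun s => (yld s).length)).sum
          ≤ (c.map (fun _ => MC g ^ (hts c))).sum := by
            apply List.sum_le_sum
            intro x hx
            exact hbound x hx
        _ = c.length * MC g ^ (hts c) := by
            simp [List.map_const', List.sum_replicate, smul_eq_mul, mul_comm]
    have hclen : c.length ≤ MC g := by
      have := output_le_MC hr
      rw [← hsy] at this
      simpa using this
    calc (yld (PT.node r.input c)).length = (ylds c).length := by simp [yld]
      _ ≤ c.length * MC g ^ (hts c) := hsum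
      _ ≤ MC g * MC g ^ (hts c) := Nat.mul_le_mul_right _ hclen
      _ = MC g ^ (1 + hts c) := by rw [pow_add, pow_one]
      _ = MC g ^ (ht (PT.node r.input c)) := by simp [ht]

end Part2

section Part3
open PT
variable {T : Type} {g : ContextFreeGrammar T}

lemma WF.input_mem {A : g.NT} {c : List (PT T g.NT)} (h : WF g (PT.node A c)) :
    ∃ r ∈ g.rules, r.input = A := by
  cases h with
  | node r hr c hsy hc => exact ⟨r, hr, rfl⟩

lemma derives_pump {p q : List T} {X : Symbol T g.NT}
    (h : g.Derives [X] ((p.map Symbol.terminal) ++ [X] ++ (q.map Symbol.terminal))) :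
    ∀ i : ℕ, g.Derives [X]
      ((((List.replicate i p).flatten).map Symbol.terminal) ++ [X] ++
        (((List.replicate i q).flatten).map Symbol.terminal))
  | 0 => by simpa using ContextFreeGrammar.Derives.refl (g := g) [X]
  | (i+1) => by
    have ih := derives_pump h i
    set P := (((List.replicate i p).flatten).map Symbol.terminal) with hP
    set Q := (((List.replicate i q).flatten).map Symbol.terminal) with hQ
    have step := (h.append_left P).append_right Q
    have comp := ih.trans step
    have e1 : (List.replicate (i+1) p).flatten = (List.replicate i p).flatten ++ p := by
      rw [List.replicate_succ']; simp
    have e2 : (List.replicate (i+1) q).flatten = q ++ (List.replicate i q).flatten := by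
      rw [List.replicate_succ]; simp
    rw [e1, e2]
    simp only [List.map_append, List.append_assoc] at comp ⊢
    exact comp

private def rt : PT T N → Option N
  | .leaf _ => none
  | .node A _ => some A

open Classical in
theorem cf_pumping (g : ContextFreeGrammar.{0} T) {w : List T}
    (hw : w ∈ g.language)
    (hlen : MC g ^ ((g.rules.image (fun r => r.input)).card + 2) < w.length) :
    ∃ u p y q z : List T, w = u ++ p ++ y ++ q ++ z ∧ p ++ q ≠ [] ∧
      ∀ i : ℕ, (u ++ (List.replicate i p).flatten ++ y ++ (List.replicate i q).flatten ++ z)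
        ∈ g.language := by
  classical
  set m := (g.rules.image (fun r => r.input)).card with hm
  obtain ⟨t₀, hwf₀, hsy₀, hyld₀⟩ := exists_tree (g := g) hw
  have hP : ∃ k, ∃ t : PT T g.NT, WF g t ∧ symb t = Symbol.nonterminal g.initial ∧
      yld t = w ∧ sz t = k := ⟨sz t₀, t₀, hwf₀, hsy₀, hyld₀, rfl⟩
  obtain ⟨t, hwf, hsy, hyld, hszt⟩ := Nat.find_spec hP
  have hminimal : ∀ t' : PT T g.NT, WF g t' → symb t' = Symbol.nonterminal g.initial →
      yld t' = w → sz t ≤ sz t' := by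
    intro t' h1 h2 h3
    rw [hszt]
    exact Nat.find_min' hP ⟨t', h1, h2, h3, rfl⟩
  have hhtb := yld_len_le hwf
  rw [hyld] at hhtb
  have h2M : 1 < MC g := lt_of_lt_of_le one_lt_two two_le_MC
  have hht : m + 2 < ht t := by
    have := lt_of_lt_of_le hlen hhtb
    exact (Nat.pow_lt_pow_iff_right h2M).mp this
  obtain ⟨l, hlenl, hch, hall, hhead⟩ := chain_of_ht (m+1) t hwf (by omega)
  obtain ⟨a, l', rfl⟩ : ∃ a l', l = a :: l' := by
    cases l with
    | nil => simp at hhead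
    | cons a l' => exact ⟨a, l', rfl⟩
  have hat : a = t := by simpa using hhead
  subst hat
  classical
  have hmaps : ∀ i : Fin ((a :: l').length), rt ((a :: l').get i) ∈
      ((g.rules.image (fun r => r.input)).image some) := by
    intro i
    obtain ⟨hwfi, A, c, he⟩ := hall _ (by exact List.get_mem (a :: l') i)
    rw [he] at hwfi ⊢
    obtain ⟨r, hr, rfl⟩ := WF.input_mem hwfi
    simp only [rt, Finset.mem_image]
    exact ⟨r.input, ⟨r, hr, rfl⟩, rfl⟩
  have hcard : ((g.rules.image (fun r => r.input)).image some).card <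
      (Finset.univ : Finset (Fin ((a :: l').length))).card := by
    have h1 : ((g.rules.image (fun r => r.input)).image some).card ≤ m := by
      rw [hm]; exact Finset.card_image_le
    have h2 : (Finset.univ : Finset (Fin ((a :: l').length))).card = m + 2 := by
      rw [Finset.card_univ, Fintype.card_fin, hlenl]
    omega
  obtain ⟨i, j, hij, hfeq⟩ : ∃ i j : Fin ((a :: l').length), i < j ∧
      rt ((a :: l').get i) = rt ((a :: l').get j) := by
    obtain ⟨i, _, j, _, hij, hfeq⟩ :=
      Finset.exists_ne_map_eq_of_card_lt_of_maps_to hcard (fun i _ => hmaps i)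
    rcases lt_or_gt_of_ne hij with h | h
    · exact ⟨i, j, h, hfeq⟩
    · exact ⟨j, i, h, hfeq.symm⟩
  letI : IsTrans (PT T g.NT) (fun x y => ProperSub y x) :=
    ⟨fun x y z h1 h2 => ProperSub.trans'' h2 h1⟩
  have hpw := List.isChain_iff_pairwise.mp hch
  have hsubji : ProperSub ((a :: l').get j) ((a :: l').get i) :=
    List.pairwise_iff_get.mp hpw i j hij
  have hsubia : Subt ((a :: l').get i) a := by
    rcases Nat.eq_zero_or_pos i.val with h0 | h0
    · have hi0 : i = (⟨0, by simp⟩ : Fin ((a :: l').length)) := Fin.ext h0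
      rw [hi0]
      exact Subt.refl a
    · have h01 : (⟨0, by simp⟩ : Fin ((a :: l').length)) < i := by
        rw [Fin.lt_def]; exact h0
      have hps : ProperSub ((a :: l').get i) ((a :: l').get ⟨0, by simp⟩) :=
        List.pairwise_iff_get.mp hpw _ i h01
      exact hps.subt
  obtain ⟨hwfi, Ai, ci, hei⟩ := hall _ (by exact List.get_mem (a :: l') i)
  obtain ⟨hwfj, Aj, cj, hej⟩ := hall _ (by exact List.get_mem (a :: l') j)
  have hAij : Ai = Aj := by
    rw [hei, hej] at hfeq
    simpa [rt] using hfeq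
  have hsymb : symb ((a :: l').get j) = symb ((a :: l').get i) := by
    rw [hei, hej]
    simp [symb, hAij]
  obtain ⟨u, z, hyu, hdu, hsubstu⟩ := subt_decomp hsubia hwf
  obtain ⟨p, q, hyp, hdp, hsubstp⟩ := subt_decomp hsubji.subt hwfi
  by_cases hpq : p ++ q = []
  · obtain ⟨rfl, rfl⟩ := List.append_eq_nil_iff.mp hpq
    obtain ⟨t', hwt', hst', hyt', hsz'⟩ := hsubstu ((a :: l').get j) hwfj hsymb
    have hyldj : yld ((a :: l').get i) = yld ((a :: l').get j) := by
      rw [hyp]; simp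
    have hwt'y : yld t' = w := by
      rw [hyt', ← hyldj, ← hyu, hyld]
    have hltij := hsubji.sz_lt
    have := hminimal t' hwt' (by rw [hst']; exact hsy) hwt'y
    omega
  · refine ⟨u, p, yld ((a :: l').get j), q, z, ?_, hpq, ?_⟩
    · rw [← hyld, hyu, hyp]
      simp [List.append_assoc]
    · intro i'
      have hdp' : g.Derives [symb ((a :: l').get i)]
          ((p.map Symbol.terminal) ++ [symb ((a :: l').get i)] ++ (q.map Symbol.terminal)) := by
        rw [hsymb] at hdp
        exact hdp
      have pumped := derives_pump hdp' i'
      have sj : g.Derives [symb ((a :: l').get i)]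
          ((yld ((a :: l').get j)).map Symbol.terminal) := by
        have hs := WF.sound hwfj
        rw [hsymb] at hs
        exact hs
      rw [ContextFreeGrammar.mem_language_iff]
      set X := symb ((a :: l').get i)
      set P := (((List.replicate i' p).flatten).map Symbol.terminal) with hPd
      set Q := (((List.replicate i' q).flatten).map Symbol.terminal) with hQd
      have d1 : g.Derives [Symbol.nonterminal g.initial]
          ((u.map Symbol.terminal) ++ [X] ++ (z.map Symbol.terminal)) := by
        rw [← hsy]; exact hdu
      have c2 := (pumped.append_right (z.map Symbol.terminal)).append_left
        (u.map Symbol.terminal)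
      simp only [List.append_assoc] at d1 c2
      have step2 := d1.trans c2
      have e2 := ((sj.append_left P).append_right
        (Q ++ (z.map Symbol.terminal))).append_left (u.map Symbol.terminal)
      simp only [List.append_assoc] at step2 e2
      have final := step2.trans e2
      simpa only [List.map_append, List.append_assoc] using final
end Part3

section Part4
open PT

def L3 : Language (Fin 3) :=
  {w | ∃ n, w = List.replicate n 0 ++ List.replicate n 1 ++ List.replicate n 2}

lemma len3 (l : List (Fin 3)) : l.length = l.count 0 + l.count 1 + l.count 2 := by
  induction l with
  | nil => simp
  | cons a l ih =>
    fin_cases a <;> simp [List.count_cons, ih] <;> omega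

lemma rep_pairwise (n : ℕ) (x : Fin 3) :
    (List.replicate n x).Pairwise (fun a b : Fin 3 => a ≤ b) := by
  induction n with
  | zero => simp
  | succ k ih =>
    rw [List.replicate_succ, List.pairwise_cons]
    exact ⟨fun b hb => by rw [List.eq_of_mem_replicate hb], ih⟩

lemma L3_pairwise {w : List (Fin 3)} (h : w ∈ L3) : w.Pairwise (fun a b : Fin 3 => a ≤ b) := by
  obtain ⟨n, rfl⟩ := h
  rw [List.pairwise_append, List.pairwise_append]
  refine ⟨⟨rep_pairwise n 0, rep_pairwise n 1, ?_⟩, rep_pairwise n 2, ?_⟩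
  · intro a ha b hb
    rw [List.eq_of_mem_replicate ha, List.eq_of_mem_replicate hb]
    decide
  · intro a ha b hb
    rcases List.mem_append.1 ha with h1 | h1 <;>
      rw [List.eq_of_mem_replicate h1, List.eq_of_mem_replicate hb] <;> decide

lemma no_desc {a b : Fin 3} (hlt : a < b) {l : List (Fin 3)}
    (hpw : l.Pairwise (fun x y : Fin 3 => x ≤ y)) (hs : List.Sublist [b, a] l) : False := by
  have hba := hpw.sublist hs
  rw [List.pairwise_cons] at hba
  have := hba.1 a (by simp)
  exact absurd (lt_of_lt_of_le hlt this) (lt_irrefl _)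

lemma pair_sublist_append {a b : Fin 3} {l1 l2 : List (Fin 3)} (h1 : b ∈ l1) (h2 : a ∈ l2) :
    List.Sublist [b, a] (l1 ++ l2) :=
  List.Sublist.append (List.singleton_sublist.mpr h1) (List.singleton_sublist.mpr h2)

open Classical in
theorem L3_not_cf (g : ContextFreeGrammar.{0} (Fin 3)) : g.language ≠ L3 := by
  classical
  intro heq
  set K := MC g ^ ((g.rules.image (fun r => r.input)).card + 2) with hK
  set n := K + 1 with hn
  set w := List.replicate n (0 : Fin 3) ++ List.replicate n 1 ++ List.replicate n 2 with hwdef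
  have hwL : w ∈ g.language := by rw [heq]; exact ⟨n, rfl⟩
  obtain ⟨u, p, y, q, z, hsplit, hpq, hpump⟩ := cf_pumping g hwL (by
    simp only [hwdef, List.length_append, List.length_replicate]
    omega)
  have hw0 : u ++ y ++ z ∈ L3 := by
    have h := hpump 0
    rw [heq] at h
    simpa using h
  have hw2 : u ++ (p ++ p) ++ y ++ (q ++ q) ++ z ∈ L3 := by
    have h := hpump 2
    rw [heq] at h
    simpa [List.replicate_succ, List.append_assoc] using h
  have hcw : ∀ x : Fin 3, w.count x = n := by
    intro x
    fin_cases x <;> simp [hwdef, List.count_append, List.count_replicate]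
  obtain ⟨n0, hargs0⟩ := hw0
  have hc0 : ∀ x : Fin 3, (u ++ y ++ z).count x = n0 := by
    intro x
    fin_cases x <;> simp [hargs0, List.count_append, List.count_replicate]
  have hcpq : ∀ x : Fin 3, (p ++ q).count x + n0 = n := by
    intro x
    have h1 := hcw x
    have h2 := hc0 x
    rw [hsplit] at h1
    simp only [List.count_append] at h1 h2 ⊢
    omega
  have hlenpq : 0 < (p ++ q).length := List.length_pos_iff.mpr hpq
  have h3 := len3 (p ++ q)
  have hposc : ∀ x : Fin 3, 0 < (p ++ q).count x := by
    intro x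
    have ex := hcpq x
    have e0 := hcpq 0
    have e1 := hcpq 1
    have e2 := hcpq 2
    omega
  have hmem : ∀ x : Fin 3, x ∈ p ∨ x ∈ q := by
    intro x
    have := hposc x
    rw [List.count_append] at this
    rcases Nat.lt_or_ge 0 (p.count x) with h | h
    · exact Or.inl (List.count_pos_iff.mp h)
    · exact Or.inr (List.count_pos_iff.mp (by omega))
  have hpw2 := L3_pairwise hw2
  have hpww : w.Pairwise (fun a b : Fin 3 => a ≤ b) := L3_pairwise ⟨n, hwdef⟩
  -- sublist lifters
  have liftpp : ∀ l : List (Fin 3), List.Sublist l (p ++ p) →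
      List.Sublist l (u ++ (p ++ p) ++ y ++ (q ++ q) ++ z) := by
    intro l hl
    exact (((hl.trans (List.sublist_append_right u _)).trans
      (List.sublist_append_left _ y)).trans
      (List.sublist_append_left _ (q ++ q))).trans (List.sublist_append_left _ z)
  have liftqq : ∀ l : List (Fin 3), List.Sublist l (q ++ q) →
      List.Sublist l (u ++ (p ++ p) ++ y ++ (q ++ q) ++ z) := by
    intro l hl
    exact (hl.trans (List.sublist_append_right (u ++ (p ++ p) ++ y) _)).trans
      (List.sublist_append_left _ z)
  have liftw : ∀ l : List (Fin 3), List.Sublist l ((u ++ p ++ y) ++ q) → List.Sublist l w := by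
    intro l hl
    rw [hsplit]
    exact hl.trans (List.sublist_append_left _ z)
  rcases hmem 2 with h2p | h2q
  · rcases hmem 0 with h0p | h0q
    · exact no_desc (by decide : (0 : Fin 3) < 2) hpw2 (liftpp _ (pair_sublist_append h2p h0p))
    · refine no_desc (by decide : (0 : Fin 3) < 2) hpww (liftw _ ?_)
      refine pair_sublist_append ?_ h0q
      simp [h2p]
  · rcases hmem 0 with h0p | h0q
    · rcases hmem 1 with h1p | h1q
      · exact no_desc (by decide : (0 : Fin 3) < 1) hpw2 (liftpp _ (pair_sublist_append h1p h0p))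
      · exact no_desc (by decide : (1 : Fin 3) < 2) hpw2 (liftqq _ (pair_sublist_append h2q h1q))
    · exact no_desc (by decide : (0 : Fin 3) < 2) hpw2 (liftqq _ (pair_sublist_append h2q h0q))

end Part4

section Part5
open PT

deriving instance DecidableEq for Symbol
deriving instance DecidableEq for ContextFreeRule

variable {α : Type} [DecidableEq α]

@[reducible] def genG (x y zz : α) (first : Bool) : ContextFreeGrammar α where
  NT := Fin 3
  initial := 0
  rules := {⟨0, if first then [.nonterminal 1, .nonterminal 2] else [.nonterminal 2, .nonterminal 1]⟩,
            ⟨1, ([] : List (Symbol α (Fin 3)))⟩,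
            ⟨1, [.terminal x, .nonterminal 1, .terminal y]⟩,
            ⟨2, ([] : List (Symbol α (Fin 3)))⟩,
            ⟨2, [.terminal zz, .nonterminal 2]⟩}

lemma yld_of_symb_terminal {N : Type} {a : PT α N} {v : α} (h : symb a = .terminal v) :
    yld a = [v] := by
  cases a with
  | leaf t =>
    simp only [symb, Symbol.terminal.injEq] at h
    simp [yld, h]
  | node A c => simp [symb] at h

lemma genG_tree (x y zz : α) (first : Bool) :
    ∀ (k : ℕ) (t : PT α (Fin 3)), sz t ≤ k → WF (genG x y zz first) t →
    ((symb t = .nonterminal 1 → ∃ n, yld t = List.replicate n x ++ List.replicate n y) ∧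
     (symb t = .nonterminal 2 → ∃ m, yld t = List.replicate m zz) ∧
     (symb t = .nonterminal 0 → ∃ n m, yld t =
        (if first then List.replicate n x ++ List.replicate n y ++ List.replicate m zz
         else List.replicate m zz ++ (List.replicate n x ++ List.replicate n y)))) := by
  intro k
  induction k with
  | zero => intro t hsz; have := sz_pos t; omega
  | succ k ih =>
    intro t hsz hwf
    rcases hwf with ⟨a⟩ | ⟨r, hr, c, hsy, hc⟩
    · refine ⟨?_, ?_, ?_⟩ <;> · intro h; simp [symb] at h
    · simp only [genG, Finset.mem_insert, Finset.mem_singleton] at hr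
      rcases hr with rfl | rfl | rfl | rfl | rfl
      · -- S rule
        obtain ⟨a, b, rfl⟩ : ∃ a b, c = [a, b] := by
          rcases first with _ | _ <;> simp only [Bool.false_eq_true, if_false, if_true] at hsy <;>
          · cases c with
            | nil => simp at hsy
            | cons a c' => cases c' with
              | nil => simp at hsy
              | cons b c'' => cases c'' with
                | nil => exact ⟨a, b, rfl⟩
                | cons _ _ => simp at hsy
        have hsza : sz a ≤ k ∧ sz b ≤ k := by
          simp only [sz, szs] at hsz; constructor <;> omega
        refine ⟨?_, ?_, ?_⟩
        · intro h; simp [symb] at h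
        · intro h; simp [symb] at h
        · intro _
          rcases first with _ | _ <;>
            simp only [Bool.false_eq_true, if_false, if_true] at hsy ⊢ <;>
            simp only [List.map_cons, List.map_nil, List.cons.injEq, and_true] at hsy <;>
            obtain ⟨ha, hb⟩ := hsy
          · obtain ⟨m, hm⟩ := (ih a hsza.1 (hc a (by simp))).2.1 ha
            obtain ⟨n, hn⟩ := (ih b hsza.2 (hc b (by simp))).1 hb
            exact ⟨n, m, by simp [yld, ylds, hn, hm, List.append_assoc]⟩
          · obtain ⟨n, hn⟩ := (ih a hsza.1 (hc a (by simp))).1 ha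
            obtain ⟨m, hm⟩ := (ih b hsza.2 (hc b (by simp))).2.1 hb
            exact ⟨n, m, by simp [yld, ylds, hn, hm, List.append_assoc]⟩
      · -- T → ε
        have hc0 : c = [] := by simpa using hsy
        subst hc0
        refine ⟨?_, ?_, ?_⟩
        · intro _; exact ⟨0, by simp [yld, ylds]⟩
        · intro h; simp [symb] at h
        · intro h; simp [symb] at h
      · -- T → x T y
        obtain ⟨a, b, c3, rfl⟩ : ∃ a b c3, c = [a, b, c3] := by
          cases c with
          | nil => simp at hsy
          | cons a c' => cases c' with
            | nil => simp at hsy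
            | cons b c'' => cases c'' with
              | nil => simp at hsy
              | cons c3 c''' => cases c''' with
                | nil => exact ⟨a, b, c3, rfl⟩
                | cons _ _ => simp at hsy
        simp only [List.map_cons, List.map_nil, List.cons.injEq, and_true] at hsy
        obtain ⟨ha, hb, hc3⟩ := hsy
        have hszb : sz b ≤ k := by
          have := sz_pos a; have := sz_pos c3
          simp only [sz, szs] at hsz; omega
        refine ⟨?_, ?_, ?_⟩
        · intro _
          obtain ⟨n, hn⟩ := (ih b hszb (hc b (by simp))).1 hb
          refine ⟨n + 1, ?_⟩
          have hya := yld_of_symb_terminal ha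
          have hyc3 := yld_of_symb_terminal hc3
          rw [show List.replicate (n+1) x = x :: List.replicate n x from List.replicate_succ (a := x) (n := n),
            show List.replicate (n+1) y = List.replicate n y ++ [y] from List.replicate_succ' (n := n) (a := y)]
          simp [yld, ylds, hya, hyc3, hn, List.append_assoc]
        · intro h; simp [symb] at h
        · intro h; simp [symb] at h
      · -- C → ε
        have hc0 : c = [] := by simpa using hsy
        subst hc0
        refine ⟨?_, ?_, ?_⟩
        · intro h; simp [symb] at h
        · intro _; exact ⟨0, by simp [yld, ylds]⟩
        · intro h; simp [symb] at h
      · -- C → z C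
        obtain ⟨a, b, rfl⟩ : ∃ a b, c = [a, b] := by
          cases c with
          | nil => simp at hsy
          | cons a c' => cases c' with
            | nil => simp at hsy
            | cons b c'' => cases c'' with
              | nil => exact ⟨a, b, rfl⟩
              | cons _ _ => simp at hsy
        simp only [List.map_cons, List.map_nil, List.cons.injEq, and_true] at hsy
        obtain ⟨ha, hb⟩ := hsy
        have hszb : sz b ≤ k := by
          have := sz_pos a
          simp only [sz, szs] at hsz; omega
        refine ⟨?_, ?_, ?_⟩
        · intro h; simp [symb] at h
        · intro _
          obtain ⟨m, hm⟩ := (ih b hszb (hc b (by simp))).2.1 hb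
          refine ⟨m + 1, ?_⟩
          have hya := yld_of_symb_terminal ha
          simp [yld, ylds, hya, hm, List.replicate_succ]
        · intro h; simp [symb] at h

lemma genG_dT (x y zz : α) (first : Bool) :
    ∀ n : ℕ, (genG x y zz first).Derives [Symbol.nonterminal 1]
      ((List.replicate n x ++ List.replicate n y).map Symbol.terminal)
  | 0 => by
    have hp : (genG x y zz first).Produces [Symbol.nonterminal 1] [] :=
      ⟨⟨1, []⟩, by simp [genG], ContextFreeRule.Rewrites.input_output⟩
    simpa using hp.single
  | (n + 1) => by
    have hp : (genG x y zz first).Produces [Symbol.nonterminal 1]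
        [Symbol.terminal x, Symbol.nonterminal 1, Symbol.terminal y] :=
      ⟨⟨1, [.terminal x, .nonterminal 1, .terminal y]⟩, by simp [genG],
        ContextFreeRule.Rewrites.input_output⟩
    have ih := genG_dT x y zz first n
    have hmid := (ih.append_left [Symbol.terminal x]).append_right [Symbol.terminal y]
    have hfin := hp.trans_derives (by simpa using hmid)
    rw [show List.replicate (n+1) x = x :: List.replicate n x from List.replicate_succ (a := x) (n := n),
      show List.replicate (n+1) y = List.replicate n y ++ [y] from List.replicate_succ' (n := n) (a := y)]
    simpa [List.map_append, List.append_assoc] using hfin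

lemma genG_dC (x y zz : α) (first : Bool) :
    ∀ m : ℕ, (genG x y zz first).Derives [Symbol.nonterminal 2]
      ((List.replicate m zz).map Symbol.terminal)
  | 0 => by
    have hp : (genG x y zz first).Produces [Symbol.nonterminal 2] [] :=
      ⟨⟨2, []⟩, by simp [genG], ContextFreeRule.Rewrites.input_output⟩
    simpa using hp.single
  | (m + 1) => by
    have hp : (genG x y zz first).Produces [Symbol.nonterminal 2]
        [Symbol.terminal zz, Symbol.nonterminal 2] :=
      ⟨⟨2, [.terminal zz, .nonterminal 2]⟩, by simp [genG],
        ContextFreeRule.Rewrites.input_output⟩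
    have ih := genG_dC x y zz first m
    have hmid := ih.append_left [Symbol.terminal zz]
    have := hp.trans_derives (by simpa using hmid)
    simpa [List.replicate_succ] using this

lemma genG_lang (x y zz : α) (first : Bool) (w : List α) :
    w ∈ (genG x y zz first).language ↔
    ∃ n m, w = (if first then List.replicate n x ++ List.replicate n y ++ List.replicate m zz
      else List.replicate m zz ++ (List.replicate n x ++ List.replicate n y)) := by
  constructor
  · intro hw
    obtain ⟨t, hwf, hsy, hyld⟩ := exists_tree hw
    have h := (genG_tree x y zz first (sz t) t le_rfl hwf).2.2 hsy
    rw [hyld] at h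
    exact h
  · rintro ⟨n, m, rfl⟩
    rw [ContextFreeGrammar.mem_language_iff]
    have hT := genG_dT x y zz first n
    have hC := genG_dC x y zz first m
    cases first
    · have hp : (genG x y zz false).Produces [Symbol.nonterminal 0]
          [Symbol.nonterminal 2, Symbol.nonterminal 1] :=
        ⟨⟨0, if false then [.nonterminal 1, .nonterminal 2] else [.nonterminal 2, .nonterminal 1]⟩,
          by simp [genG], by simpa using ContextFreeRule.Rewrites.input_output⟩
      have := hp.trans_derives (by simpa using derives_append hC hT)
      simpa [List.map_append, List.append_assoc] using this
    · have hp : (genG x y zz true).Produces [Symbol.nonterminal 0]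
          [Symbol.nonterminal 1, Symbol.nonterminal 2] :=
        ⟨⟨0, if true then [.nonterminal 1, .nonterminal 2] else [.nonterminal 2, .nonterminal 1]⟩,
          by simp [genG], by simpa using ContextFreeRule.Rewrites.input_output⟩
      have := hp.trans_derives (by simpa using derives_append hT hC)
      simpa [List.map_append, List.append_assoc] using this

end Part5

section Part6
open Classical
variable {T T' : Type}

def mapSym {N : Type} (f : T → T') : Symbol T N → Symbol T' N
  | .terminal t => .terminal (f t)
  | .nonterminal A => .nonterminal A

def mapRule {N : Type} (f : T → T') (r : ContextFreeRule T N) : ContextFreeRule T' N :=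
  ⟨r.input, r.output.map (mapSym f)⟩

noncomputable def mapG (f : T → T') (g : ContextFreeGrammar.{0} T) :
    ContextFreeGrammar.{0} T' :=
  ⟨g.NT, g.initial, g.rules.image (mapRule f)⟩

lemma mapG_derives {f : T → T'} {g : ContextFreeGrammar.{0} T}
    {u v : List (Symbol T g.NT)} (h : g.Derives u v) :
    (mapG f g).Derives (u.map (mapSym f)) (v.map (mapSym f)) := by
  induction h with
  | refl => exact ContextFreeGrammar.Derives.refl _
  | tail _ hstep ih =>
    refine ih.trans_produces ?_
    obtain ⟨r, hr, hrw⟩ := hstep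
    obtain ⟨p, q, hu, hv⟩ := hrw.exists_parts
    refine ⟨mapRule f r, ?_, ?_⟩
    · exact Finset.mem_image_of_mem _ hr
    · rw [hu, hv]
      have := ContextFreeRule.rewrites_of_exists_parts (mapRule f r)
        (p.map (mapSym f)) (q.map (mapSym f))
      simpa [mapRule, mapSym, List.map_append, mapG] using this

lemma mapG_mem_language {f : T → T'} {g : ContextFreeGrammar.{0} T} {w : List T}
    (h : w ∈ g.language) : w.map f ∈ (mapG f g).language := by
  rw [ContextFreeGrammar.mem_language_iff] at h ⊢
  have := mapG_derives (f := f) h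
  simpa [mapSym, List.map_map, Function.comp_def, mapG] using this

lemma mapG_mapG {f : T → T'} {e : T' → T} (h : ∀ a, e (f a) = a)
    (g : ContextFreeGrammar.{0} T) : mapG e (mapG f g) = g := by
  obtain ⟨NT, init, rules⟩ := g
  unfold mapG
  simp only [ContextFreeGrammar.mk.injEq, heq_eq_eq, true_and]
  rw [Finset.image_image]
  have hid : ∀ r : ContextFreeRule T NT, (mapRule e ∘ mapRule f) r = r := by
    intro r
    obtain ⟨inp, out⟩ := r
    simp only [Function.comp_apply, mapRule, List.map_map, ContextFreeRule.mk.injEq, true_and]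
    have : ∀ s : Symbol T NT, (mapSym e ∘ mapSym f) s = s := by
      intro s; cases s <;> simp [mapSym, h]
    calc out.map (mapSym e ∘ mapSym f) = out.map id := List.map_congr_left (fun a _ => this a)
      _ = out := List.map_id out
  calc rules.image (mapRule e ∘ mapRule f) = rules.image id := Finset.image_congr
        (fun r _ => hid r)
    _ = rules := Finset.image_id
end Part6
end CFPump


section Final
open CFPump

lemma clr_append {T X : Type} (a b : RefWord T X) : clr (a ++ b) = clr a ++ clr b := by
  simp [clr, List.filterMap_append]

lemma clr_rep_inl {T X : Type} (n : ℕ) (a : T) :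
    clr (X := X) (List.replicate n (Sum.inl a)) = List.replicate n a := by
  induction n with
  | zero => simp [clr]
  | succ k ih =>
    rw [List.replicate_succ, List.replicate_succ]
    simpa [clr, List.filterMap_cons] using ih

lemma clr_map_inl {T X : Type} (d : List T) : clr (X := X) (d.map Sum.inl) = d := by
  induction d with
  | nil => simp [clr]
  | cons a l ih => simpa [clr, List.filterMap_cons] using ih

lemma refword_eq_map_inl {T X : Type} (hX : IsEmpty X) (r : RefWord T X) :
    r = (clr r).map Sum.inl := by
  induction r with
  | nil => simp [clr]
  | cons a l ih =>
    cases a with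
    | inl t => simpa [clr, List.filterMap_cons] using ih
    | inr v => exact (hX.false v.1).elim

/-- The class of context-free spanners is not closed under natural join: there are context-free
spanners `S1` (over variables `X1`) and `S2` (over `X2`) whose natural join is not context-free. -/
theorem stmt7 :
    ∃ (X : Type) (X1 X2 : Set X)
      (S1 : List (Fin 3) → Set (↥X1 → ℕ × ℕ)) (S2 : List (Fin 3) → Set (↥X2 → ℕ × ℕ)),
      IsCFSpanner S1 ∧ IsCFSpanner S2 ∧
      ¬ IsCFSpanner (fun d => {μ : ↥(X1 ∪ X2) → ℕ × ℕ |
          (fun x : ↥X1 => μ ⟨x.1, Set.mem_union_left X2 x.2⟩) ∈ S1 d ∧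
          (fun x : ↥X2 => μ ⟨x.1, Set.mem_union_right X1 x.2⟩) ∈ S2 d}) := by 
  classical
  refine ⟨Empty, ∅, ∅,
    fun d => {_μ | ∃ n m, d = List.replicate n 0 ++ List.replicate n 1 ++ List.replicate m 2},
    fun d => {_μ | ∃ n m, d = List.replicate m 0 ++ (List.replicate n 1 ++ List.replicate n 2)},
    ?_, ?_, ?_⟩
  · -- S1 is a CF spanner
    refine ⟨genG (Sum.inl 0) (Sum.inl 1) (Sum.inl 2) true, fun d => ?_⟩
    ext μ
    simp only [spanner, Set.mem_setOf_eq]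
    constructor
    · rintro ⟨n, m, rfl⟩
      refine ⟨List.replicate n (Sum.inl 0) ++ List.replicate n (Sum.inl 1) ++
        List.replicate m (Sum.inl 2), ?_, fun x => x.1.elim, ?_, fun x => x.1.elim⟩
      · exact (genG_lang _ _ _ true _).mpr ⟨n, m, by simp⟩
      · simp [clr_append, clr_rep_inl]
    · rintro ⟨r, hrL, -, rfl, -⟩
      obtain ⟨n, m, rfl⟩ := (genG_lang _ _ _ true r).mp hrL
      exact ⟨n, m, by simp [clr_append, clr_rep_inl]⟩
  · -- S2 is a CF spanner
    refine ⟨genG (Sum.inl 1) (Sum.inl 2) (Sum.inl 0) false, fun d => ?_⟩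
    ext μ
    simp only [spanner, Set.mem_setOf_eq]
    constructor
    · rintro ⟨n, m, rfl⟩
      refine ⟨List.replicate m (Sum.inl 0) ++ (List.replicate n (Sum.inl 1) ++
        List.replicate n (Sum.inl 2)), ?_, fun x => x.1.elim, ?_, fun x => x.1.elim⟩
      · exact (genG_lang _ _ _ false _).mpr ⟨n, m, by simp⟩
      · simp [clr_append, clr_rep_inl]
    · rintro ⟨r, hrL, -, rfl, -⟩
      obtain ⟨n, m, rfl⟩ := (genG_lang _ _ _ false r).mp hrL
      exact ⟨n, m, by simp [clr_append, clr_rep_inl]⟩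
  · -- the join is not a CF spanner
    rintro ⟨G, hG⟩
    set μ0 : ↥((∅ : Set Empty) ∪ ∅) → ℕ × ℕ := fun x => x.1.elim with hμ0
    set f : Fin 3 ⊕ VarOp ↥((∅ : Set Empty) ∪ ∅) → Fin 3 :=
      Sum.elim id (fun v => v.1.1.elim) with hf
    have hfe : ∀ s : Fin 3 ⊕ VarOp ↥((∅ : Set Empty) ∪ ∅), Sum.inl (f s) = s := by
      rintro (a | v)
      · rfl
      · exact v.1.1.elim
    apply L3_not_cf (mapG f G)
    ext d
    constructor
    · intro hd
      have h2 := mapG_mem_language (f := (Sum.inl : Fin 3 → Fin 3 ⊕ VarOp ↥((∅ : Set Empty) ∪ ∅))) hd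
      rw [mapG_mapG hfe] at h2
      have hsp : μ0 ∈ spanner G d :=
        ⟨d.map Sum.inl, h2, fun x => x.1.elim, clr_map_inl d, fun x => x.1.elim⟩
      rw [← hG d] at hsp
      obtain ⟨⟨n, m, hd1⟩, ⟨n', m', hd2⟩⟩ := hsp
      refine ⟨n, ?_⟩
      have heq := hd1.symm.trans hd2
      have c0 := congrArg (List.count (0 : Fin 3)) heq
      have c1 := congrArg (List.count (1 : Fin 3)) heq
      have c2 := congrArg (List.count (2 : Fin 3)) heq
      simp [List.count_append, List.count_replicate] at c0 c1 c2
      have hnm : m = n := by omega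
      rw [hd1, hnm]
    · rintro ⟨n, rfl⟩
      have hsp : μ0 ∈ spanner G (List.replicate n 0 ++ List.replicate n 1 ++
          List.replicate n 2) := by
        rw [← hG _]
        exact ⟨⟨n, n, rfl⟩, ⟨n, n, by simp [List.append_assoc]⟩⟩
      obtain ⟨r, hrL, -, hclr, -⟩ := hsp
      have hr := refword_eq_map_inl ⟨fun x => x.1.elim⟩ r
      have hm := mapG_mem_language (f := f) hrL
      have hmapf : r.map f = clr r := by
        conv_lhs => rw [hr]
        simp [List.map_map, Function.comp, hf]
      rw [hmapf, hclr] at hm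
      exact hm

end Final
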